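/- Let P be a consensus matrix with maximum out-degree δ_out (excluding self-loops) in its directed graph. Then for all nodes u, v, (1/(4δ_out − 2)) R_{uv}(G(P)) ≤ R_{uv}(G(P*P)) ≤ R_{uv}(G(P)), where R denotes effective resistance with unit conductances. -/
import Mathlib


open Matrix

/-- A consensus matrix: entrywise nonnegative, row-stochastic, irreducible
(for every pair of indices some power has a positive entry), with positive diagonal. -/
def IsConsensus {n : ℕ} (P : Matrix (Fin n) (Fin n) ℝ) : Prop :=
  (∀ i j, 0 ≤ P i j) ∧ (∀ i, (∑ j, P i j) = 1) ∧
  (∀ i j, ∃ k : ℕ, 0 < (P ^ k) i j) ∧ (∀ i, 0 < P i i)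

/-- `mu` is the invariant measure of `P`: strictly positive, sums to `1`,
and is a left fixed vector of `P`. -/
def IsInvMeasure {n : ℕ} (P : Matrix (Fin n) (Fin n) ℝ) (mu : Fin n → ℝ) : Prop :=
  (∀ i, 0 < mu i) ∧ (∑ i, mu i) = 1 ∧ (∀ j, (∑ i, mu i * P i j) = mu j)

/-- The time reversal `P* = Π⁻¹ Pᵀ Π` with `Π = diag(mu)`. -/
noncomputable def Pstar {n : ℕ} (P : Matrix (Fin n) (Fin n) ℝ) (mu : Fin n → ℝ) :
    Matrix (Fin n) (Fin n) ℝ :=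
  Matrix.diagonal (fun i => (mu i)⁻¹) * Pᵀ * Matrix.diagonal mu

/-- The graph Laplacian `L(C) = diag(C 𝟙) − C`. -/
def lap {n : ℕ} (C : Matrix (Fin n) (Fin n) ℝ) : Matrix (Fin n) (Fin n) ℝ :=
  Matrix.diagonal (fun i => ∑ j, C i j) - C

/-- A conductance matrix: symmetric, entrywise nonnegative, irreducible. -/
def IsConductance {n : ℕ} (C : Matrix (Fin n) (Fin n) ℝ) : Prop :=
  Cᵀ = C ∧ (∀ i j, 0 ≤ C i j) ∧ (∀ i j, ∃ k : ℕ, 0 < (C ^ k) i j)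

/-- The effective resistance between `a` and `b`: `v a - v b` for a solution `v`
of `L(C) v = e_a - e_b` (junk value `0` if no solution exists). -/
noncomputable def effRes {n : ℕ} (C : Matrix (Fin n) (Fin n) ℝ) (a b : Fin n) : ℝ :=
  open Classical in
  if h : ∃ v : Fin n → ℝ, lap C *ᵥ v = Pi.single a 1 - Pi.single b 1 then
    h.choose a - h.choose b
  else 0

/-- The average effective resistance `(1/(2 n²)) Σ_{u,v} R_{uv}(C)`. -/
noncomputable def avgRes {n : ℕ} (C : Matrix (Fin n) (Fin n) ℝ) : ℝ :=
  (1 / (2 * (n : ℝ) ^ 2)) * ∑ u, ∑ v, effRes C u v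

/-- The unit-conductance matrix of the undirected graph associated with `P`:
edge `{u,v}` iff `P u v ≠ 0` or `P v u ≠ 0`. -/
noncomputable def adjMat {n : ℕ} (P : Matrix (Fin n) (Fin n) ℝ) : Matrix (Fin n) (Fin n) ℝ :=
  Matrix.of fun i j => if i ≠ j ∧ (P i j ≠ 0 ∨ P j i ≠ 0) then (1 : ℝ) else 0

/-- The LQ cost `J(P) = (1/n) Σ_{t≥0} ‖P^t − 𝟙 muᵀ‖_F²`. -/
noncomputable def LQcost {n : ℕ} (P : Matrix (Fin n) (Fin n) ℝ) (mu : Fin n → ℝ) : ℝ :=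
  (1 / (n : ℝ)) *
    ∑' t : ℕ, ∑ i, ∑ j,
      ((P ^ t - Matrix.vecMulVec (fun _ => 1) mu : Matrix (Fin n) (Fin n) ℝ) i j) ^ 2

/-- The weighted LQ cost `J_w(P)`. -/
noncomputable def LQcostW {n : ℕ} (P : Matrix (Fin n) (Fin n) ℝ) (mu : Fin n → ℝ) : ℝ :=
  ∑' t : ℕ, Matrix.trace ((1 - Matrix.vecMulVec mu (fun _ => 1)) * Pᵀ ^ t *
    Matrix.diagonal mu * P ^ t * (1 - Matrix.vecMulVec (fun _ => 1) mu))

/-- The Green matrix `G(P) = Σ_{t≥0} (P^t − 𝟙 muᵀ)`. -/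
noncomputable def Green {n : ℕ} (P : Matrix (Fin n) (Fin n) ℝ) (mu : Fin n → ℝ) :
    Matrix (Fin n) (Fin n) ℝ :=
  ∑' t : ℕ, (P ^ t - Matrix.vecMulVec (fun _ => 1) mu)

/-- Out-degree (excluding self-loops) of node `i` in the directed graph of `P`. -/
noncomputable def outDeg {n : ℕ} (P : Matrix (Fin n) (Fin n) ℝ) (i : Fin n) : ℕ :=
  (Finset.univ.filter fun j => j ≠ i ∧ P i j ≠ 0).card

/-- In-degree (excluding self-loops) of node `j` in the directed graph of `P`. -/
noncomputable def inDeg {n : ℕ} (P : Matrix (Fin n) (Fin n) ℝ) (j : Fin n) : ℕ :=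
  (Finset.univ.filter fun i => i ≠ j ∧ P i j ≠ 0).card

lemma lap_mulVec {n : ℕ} (C : Matrix (Fin n) (Fin n) ℝ) (g : Fin n → ℝ) (i : Fin n) :
    (lap C *ᵥ g) i = ∑ j, C i j * (g i - g j) := by
  simp only [lap, Matrix.sub_mulVec, Pi.sub_apply, Matrix.mulVec_diagonal]
  simp [mulVec, dotProduct, mul_sub, Finset.sum_sub_distrib, Finset.mul_sum, mul_comm]

noncomputable def quadB {n : ℕ} (C : Matrix (Fin n) (Fin n) ℝ) (f g : Fin n → ℝ) : ℝ :=
  ∑ i, ∑ j, C i j * (f i - f j) * (g i - g j)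

lemma dot_lap {n : ℕ} (C : Matrix (Fin n) (Fin n) ℝ) (f g : Fin n → ℝ) :
    f ⬝ᵥ (lap C *ᵥ g) = ∑ i, ∑ j, C i j * (f i * (g i - g j)) := by
  simp only [dotProduct, lap_mulVec, Finset.mul_sum]
  exact Finset.sum_congr rfl fun i _ => Finset.sum_congr rfl fun j _ => by ring

lemma sum_swap_sym {n : ℕ} {C : Matrix (Fin n) (Fin n) ℝ} (hsym : Cᵀ = C)
    (h : Fin n → Fin n → ℝ) :
    ∑ i, ∑ j, C i j * h i j = ∑ i, ∑ j, C i j * h j i := by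
  rw [Finset.sum_comm]
  refine Finset.sum_congr rfl fun i _ => Finset.sum_congr rfl fun j _ => ?_
  have hc : C j i = C i j := congrFun (congrFun hsym i) j
  rw [hc]

lemma quadB_eq {n : ℕ} {C : Matrix (Fin n) (Fin n) ℝ} (hsym : Cᵀ = C) (f g : Fin n → ℝ) :
    quadB C f g = 2 * (f ⬝ᵥ (lap C *ᵥ g)) := by
  rw [dot_lap, quadB]
  have h3 : ∑ i, ∑ j, C i j * (f j * (g i - g j)) = ∑ i, ∑ j, C i j * (f i * (g j - g i)) :=
    sum_swap_sym hsym (fun i j => f j * (g i - g j))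
  have split : ∑ i, ∑ j, C i j * (f i - f j) * (g i - g j)
      = ∑ i, ∑ j, C i j * (f i * (g i - g j)) - ∑ i, ∑ j, C i j * (f j * (g i - g j)) := by
    rw [← Finset.sum_sub_distrib]
    refine Finset.sum_congr rfl fun i _ => ?_
    rw [← Finset.sum_sub_distrib]
    exact Finset.sum_congr rfl fun j _ => by ring
  have neg : ∑ i, ∑ j, C i j * (f i * (g j - g i)) = - ∑ i, ∑ j, C i j * (f i * (g i - g j)) := by
    rw [← Finset.sum_neg_distrib]
    refine Finset.sum_congr rfl fun i _ => ?_
    rw [← Finset.sum_neg_distrib]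
    exact Finset.sum_congr rfl fun j _ => by ring
  rw [split, h3, neg]; ring

lemma quadB_sq {n : ℕ} (C : Matrix (Fin n) (Fin n) ℝ) (f : Fin n → ℝ) :
    quadB C f f = ∑ i, ∑ j, C i j * (f i - f j) ^ 2 := by
  refine Finset.sum_congr rfl fun i _ => Finset.sum_congr rfl fun j _ => by ring

lemma quadB_nonneg {n : ℕ} {C : Matrix (Fin n) (Fin n) ℝ} (hnn : ∀ i j, 0 ≤ C i j)
    (f : Fin n → ℝ) : 0 ≤ quadB C f f := by
  rw [quadB_sq]
  exact Finset.sum_nonneg fun i _ => Finset.sum_nonneg fun j _ =>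
    mul_nonneg (hnn i j) (sq_nonneg _)

lemma quadB_mono {n : ℕ} {C C' : Matrix (Fin n) (Fin n) ℝ} (hle : ∀ i j, C i j ≤ C' i j)
    (f : Fin n → ℝ) : quadB C f f ≤ quadB C' f f := by
  rw [quadB_sq, quadB_sq]
  exact Finset.sum_le_sum fun i _ => Finset.sum_le_sum fun j _ =>
    mul_le_mul_of_nonneg_right (hle i j) (sq_nonneg _)

lemma quadB_expand {n : ℕ} (C : Matrix (Fin n) (Fin n) ℝ) (f g : Fin n → ℝ) (t : ℝ) :
    quadB C (f + t • g) (f + t • g)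
      = quadB C g g * t ^ 2 + (2 * quadB C f g) * t + quadB C f f := by
  simp only [quadB, Finset.sum_mul, Finset.mul_sum, ← Finset.sum_add_distrib]
  refine Finset.sum_congr rfl fun i _ => Finset.sum_congr rfl fun j _ => ?_
  simp only [Pi.add_apply, Pi.smul_apply, smul_eq_mul]
  ring

lemma quadB_cs {n : ℕ} {C : Matrix (Fin n) (Fin n) ℝ} (hnn : ∀ i j, 0 ≤ C i j)
    (f g : Fin n → ℝ) : quadB C f g ^ 2 ≤ quadB C f f * quadB C g g := by
  have key : ∀ t : ℝ, 0 ≤ quadB C g g * (t * t) + (2 * quadB C f g) * t + quadB C f f := by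
    intro t
    have h := quadB_nonneg hnn (f + t • g)
    rw [quadB_expand] at h
    nlinarith [h]
  have hd := discrim_le_zero (a := quadB C g g) (b := 2 * quadB C f g) (c := quadB C f f) key
  rw [discrim] at hd
  nlinarith [hd]

noncomputable def sumF (n : ℕ) : (Fin n → ℝ) →ₗ[ℝ] ℝ where
  toFun f := ∑ i, f i
  map_add' f g := by simp [Finset.sum_add_distrib]
  map_smul' c f := by simp [Finset.mul_sum]

lemma exists_lap_solution {n : ℕ} (C : Matrix (Fin n) (Fin n) ℝ) (hsym : Cᵀ = C)
    (hker : ∀ f : Fin n → ℝ, lap C *ᵥ f = 0 → ∀ i j, f i = f j)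
    (e : Fin n → ℝ) (he : ∑ i, e i = 0) :
    ∃ x, lap C *ᵥ x = e := by
  rcases Nat.eq_zero_or_pos n with h0 | hn
  · subst h0; exact ⟨0, funext fun i => i.elim0⟩
  set T : (Fin n → ℝ) →ₗ[ℝ] (Fin n → ℝ) := Matrix.mulVecLin (lap C) with hT
  have hTapp : ∀ g, T g = lap C *ᵥ g := fun g => rfl
  set one : Fin n → ℝ := fun _ => 1 with hone
  have hone_ne : one ≠ 0 := by
    intro h
    have := congrFun h ⟨0, hn⟩
    simp [hone] at this
  have hker_eq : LinearMap.ker T = Submodule.span ℝ {one} := by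
    apply le_antisymm
    · intro f hf
      rw [LinearMap.mem_ker] at hf
      have hc := hker f (by rw [← hTapp]; exact hf)
      rw [Submodule.mem_span_singleton]
      exact ⟨f ⟨0, hn⟩, funext fun i => by simp [hone, hc i ⟨0, hn⟩]⟩
    · rw [Submodule.span_le, Set.singleton_subset_iff]
      rw [SetLike.mem_coe, LinearMap.mem_ker, hTapp]
      funext i
      simp [lap_mulVec, hone]
  have hrange_le : LinearMap.range T ≤ LinearMap.ker (sumF n) := by
    rintro x ⟨g, rfl⟩
    rw [LinearMap.mem_ker]
    show ∑ i, (T g) i = 0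
    simp only [hTapp, lap_mulVec]
    have h1 : ∑ i, ∑ j, C i j * (g i - g j) = ∑ i, ∑ j, C i j * (g j - g i) :=
      sum_swap_sym hsym (fun i j => g i - g j)
    have h2 : ∑ i, ∑ j, C i j * (g j - g i) = - ∑ i, ∑ j, C i j * (g i - g j) := by
      rw [← Finset.sum_neg_distrib]
      refine Finset.sum_congr rfl fun i _ => ?_
      rw [← Finset.sum_neg_distrib]
      exact Finset.sum_congr rfl fun j _ => by ring
    linarith [h1, h2]
  have hsurj : Function.Surjective (sumF n) := by
    intro c
    refine ⟨fun _ => c / n, ?_⟩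
    show ∑ _i : Fin n, c / n = c
    rw [Finset.sum_const, Finset.card_univ, Fintype.card_fin, nsmul_eq_mul]
    field_simp
  have hk1 : Module.finrank ℝ (LinearMap.ker T) = 1 := by
    rw [hker_eq]; exact finrank_span_singleton hone_ne
  have hrk : Module.finrank ℝ (LinearMap.range T) + Module.finrank ℝ (LinearMap.ker T)
      = n := by
    rw [LinearMap.finrank_range_add_finrank_ker T]
    simp
  have hrφ : Module.finrank ℝ (LinearMap.range (sumF n)) = 1 := by
    rw [LinearMap.range_eq_top.mpr hsurj]
    simp
  have hkφ : Module.finrank ℝ (LinearMap.ker (sumF n)) = n - 1 := by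
    have := LinearMap.finrank_range_add_finrank_ker (sumF n)
    simp [hrφ] at this
    omega
  have heq : LinearMap.range T = LinearMap.ker (sumF n) := by
    apply Submodule.eq_of_le_of_finrank_eq hrange_le
    omega
  have : e ∈ LinearMap.range T := by
    rw [heq, LinearMap.mem_ker]; exact he
  obtain ⟨x, hx⟩ := this
  exact ⟨x, by rw [← hTapp]; exact hx⟩

lemma adjMat_sym {n : ℕ} (P : Matrix (Fin n) (Fin n) ℝ) : (adjMat P)ᵀ = adjMat P := by
  ext i j
  simp only [Matrix.transpose_apply, adjMat, Matrix.of_apply]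
  by_cases h1 : j ≠ i ∧ (P j i ≠ 0 ∨ P i j ≠ 0)
  · rw [if_pos h1, if_pos ⟨Ne.symm h1.1, h1.2.symm⟩]
  · rw [if_neg h1, if_neg (fun h => h1 ⟨Ne.symm h.1, h.2.symm⟩)]

lemma adjMat_nonneg {n : ℕ} (P : Matrix (Fin n) (Fin n) ℝ) (i j : Fin n) :
    0 ≤ adjMat P i j := by
  simp only [adjMat, Matrix.of_apply]
  split <;> norm_num

lemma adjMat_le_one {n : ℕ} (P : Matrix (Fin n) (Fin n) ℝ) (i j : Fin n) :
    adjMat P i j ≤ 1 := by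
  simp only [adjMat, Matrix.of_apply]
  split <;> norm_num

lemma Q_apply {n : ℕ} (P : Matrix (Fin n) (Fin n) ℝ) (mu : Fin n → ℝ) (u v : Fin n) :
    (Pstar P mu * P) u v = ∑ w, (mu u)⁻¹ * P w u * (mu w * P w v) := by
  rw [Pstar, Matrix.mul_apply]
  simp only [Matrix.mul_diagonal, Matrix.diagonal_mul, Matrix.transpose_apply]
  exact Finset.sum_congr rfl fun w _ => by ring

lemma Q_ne_iff {n : ℕ} {P : Matrix (Fin n) (Fin n) ℝ} {mu : Fin n → ℝ}
    (hPnn : ∀ i j, 0 ≤ P i j) (hmupos : ∀ i, 0 < mu i) (u v : Fin n) :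
    (Pstar P mu * P) u v ≠ 0 ↔ ∃ w, P w u ≠ 0 ∧ P w v ≠ 0 := by
  rw [Q_apply]
  constructor
  · intro h
    by_contra hc
    push_neg at hc
    apply h
    refine Finset.sum_eq_zero fun w _ => ?_
    rcases eq_or_ne (P w u) 0 with h1 | h1
    · rw [h1]; ring
    · rw [hc w h1]; ring
  · rintro ⟨w, h1, h2⟩
    have hpos : 0 < ∑ w, (mu u)⁻¹ * P w u * (mu w * P w v) := by
      refine Finset.sum_pos' (fun i _ => ?_) ⟨w, Finset.mem_univ w, ?_⟩
      · have := hPnn i u; have := hPnn i v; have := (hmupos u).le; have := (hmupos i).le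
        positivity
      · have hu := (hPnn w u).lt_of_ne (Ne.symm h1)
        have hv := (hPnn w v).lt_of_ne (Ne.symm h2)
        have := hmupos u; have := hmupos w
        positivity
    exact hpos.ne'

lemma pow_entry_nonneg {n : ℕ} {P : Matrix (Fin n) (Fin n) ℝ} (hPnn : ∀ i j, 0 ≤ P i j) :
    ∀ (k : ℕ) (i j : Fin n), 0 ≤ (P ^ k) i j := by
  intro k
  induction k with
  | zero => intro i j; simp [Matrix.one_apply]; split <;> norm_num
  | succ k ih =>
    intro i j
    rw [pow_succ, Matrix.mul_apply]
    exact Finset.sum_nonneg fun w _ => mul_nonneg (ih i w) (hPnn w j)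

lemma conn_of_adj {n : ℕ} {P : Matrix (Fin n) (Fin n) ℝ}
    (hPnn : ∀ i j, 0 ≤ P i j) (hirr : ∀ i j, ∃ k : ℕ, 0 < (P ^ k) i j)
    (f : Fin n → ℝ) (hf : ∀ i j, adjMat P i j ≠ 0 → f i = f j) :
    ∀ i j, f i = f j := by
  have aux : ∀ (k : ℕ) (i j : Fin n), 0 < (P ^ k) i j → f i = f j := by
    intro k
    induction k with
    | zero =>
      intro i j h
      rw [pow_zero, Matrix.one_apply] at h
      split at h
      · subst ‹i = j›; rfl
      · exact absurd h (lt_irrefl 0)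
    | succ k ih =>
      intro i j h
      rw [pow_succ, Matrix.mul_apply] at h
      have : ∃ w ∈ Finset.univ, (P ^ k) i w * P w j ≠ 0 := by
        by_contra hc
        push_neg at hc
        rw [Finset.sum_eq_zero fun w hw => hc w hw] at h
        exact lt_irrefl 0 h
      obtain ⟨w, _, hw⟩ := this
      have h1 : (P ^ k) i w ≠ 0 := fun h' => hw (by rw [h']; ring)
      have h2 : P w j ≠ 0 := fun h' => hw (by rw [h']; ring)
      have hiw : f i = f w := ih i w ((pow_entry_nonneg hPnn k i w).lt_of_ne (Ne.symm h1))
      rcases eq_or_ne w j with rfl | hwj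
      · exact hiw
      · refine hiw.trans (hf w j ?_)
        simp only [adjMat, Matrix.of_apply, if_pos (⟨hwj, Or.inl h2⟩ :
          w ≠ j ∧ (P w j ≠ 0 ∨ P j w ≠ 0))]
        norm_num
  intro i j
  obtain ⟨k, hk⟩ := hirr i j
  exact aux k i j hk

lemma exists_edge {n : ℕ} {P : Matrix (Fin n) (Fin n) ℝ}
    (hPnn : ∀ i j, 0 ≤ P i j) (hirr : ∀ i j, ∃ k : ℕ, 0 < (P ^ k) i j)
    {u v : Fin n} (huv : u ≠ v) : ∃ a b : Fin n, b ≠ a ∧ P a b ≠ 0 := by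
  have aux : ∀ (k : ℕ) (i j : Fin n), i ≠ j → 0 < (P ^ k) i j →
      ∃ a b : Fin n, b ≠ a ∧ P a b ≠ 0 := by
    intro k
    induction k with
    | zero =>
      intro i j hij h
      rw [pow_zero, Matrix.one_apply, if_neg hij] at h
      exact absurd h (lt_irrefl 0)
    | succ k ih =>
      intro i j hij h
      rw [pow_succ, Matrix.mul_apply] at h
      have : ∃ w ∈ Finset.univ, (P ^ k) i w * P w j ≠ 0 := by
        by_contra hc
        push_neg at hc
        rw [Finset.sum_eq_zero fun w hw => hc w hw] at h
        exact lt_irrefl 0 h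
      obtain ⟨w, _, hw⟩ := this
      have h1 : (P ^ k) i w ≠ 0 := fun h' => hw (by rw [h']; ring)
      have h2 : P w j ≠ 0 := fun h' => hw (by rw [h']; ring)
      rcases eq_or_ne w j with rfl | hwj
      · exact ih i w hij ((pow_entry_nonneg hPnn k i w).lt_of_ne (Ne.symm h1))
      · exact ⟨w, j, Ne.symm hwj, h2⟩
  obtain ⟨k, hk⟩ := hirr u v
  exact aux k u v huv hk

lemma outDeg_sum {n : ℕ} (P : Matrix (Fin n) (Fin n) ℝ) (w : Fin n) :
    ∑ v ∈ Finset.univ.erase w, (if P w v ≠ 0 then (1 : ℝ) else 0) = (outDeg P w : ℝ) := by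
  rw [Finset.sum_ite, Finset.sum_const, Finset.sum_const]
  simp only [nsmul_eq_mul, mul_one, mul_zero, add_zero, outDeg]
  norm_cast
  congr 1
  ext x
  simp [Finset.mem_erase, Finset.mem_filter, and_comm]

lemma adj_le {n : ℕ} {P : Matrix (Fin n) (Fin n) ℝ} {mu : Fin n → ℝ}
    (hPnn : ∀ i j, 0 ≤ P i j) (hmupos : ∀ i, 0 < mu i) (hdiag : ∀ i, 0 < P i i) :
    ∀ i j, adjMat P i j ≤ adjMat (Pstar P mu * P) i j := by
  intro i j
  by_cases h : i ≠ j ∧ (P i j ≠ 0 ∨ P j i ≠ 0)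
  · obtain ⟨hij, hor⟩ := h
    have hRHS : adjMat (Pstar P mu * P) i j = 1 := by
      simp only [adjMat, Matrix.of_apply]
      rw [if_pos]
      refine ⟨hij, ?_⟩
      rcases hor with h1 | h1
      · exact Or.inl ((Q_ne_iff hPnn hmupos i j).mpr ⟨i, (hdiag i).ne', h1⟩)
      · exact Or.inr ((Q_ne_iff hPnn hmupos j i).mpr ⟨j, (hdiag j).ne', h1⟩)
    rw [hRHS]
    exact adjMat_le_one P i j
  · have : adjMat P i j = 0 := by simp only [adjMat, Matrix.of_apply, if_neg h]
    rw [this]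
    exact adjMat_nonneg _ i j

noncomputable def sInd {n : ℕ} (P : Matrix (Fin n) (Fin n) ℝ) (a b : Fin n) : ℝ :=
  if P a b ≠ 0 then 1 else 0

lemma sInd_nonneg {n : ℕ} (P : Matrix (Fin n) (Fin n) ℝ) (a b : Fin n) : 0 ≤ sInd P a b := by
  rw [sInd]; split <;> norm_num

lemma sInd_le_one {n : ℕ} (P : Matrix (Fin n) (Fin n) ℝ) (a b : Fin n) : sInd P a b ≤ 1 := by
  rw [sInd]; split <;> norm_num

lemma sInd_le_adj {n : ℕ} (P : Matrix (Fin n) (Fin n) ℝ) {a b : Fin n} (hab : b ≠ a) :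
    sInd P a b ≤ adjMat P a b := by
  rw [sInd]
  split
  · simp only [adjMat, Matrix.of_apply]
    rw [if_pos ⟨Ne.symm hab, Or.inl ‹P a b ≠ 0›⟩]
  · exact adjMat_nonneg P a b

lemma sInd_outDeg {n : ℕ} (P : Matrix (Fin n) (Fin n) ℝ) (w : Fin n) :
    ∑ v ∈ Finset.univ.erase w, sInd P w v = (outDeg P w : ℝ) := by
  rw [← outDeg_sum]
  rfl

lemma part_bound {n : ℕ} (P : Matrix (Fin n) (Fin n) ℝ) {d : ℕ} (hd : ∀ i, outDeg P i ≤ d)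
    (hd1 : 1 ≤ d) (w : Fin n) (q : Fin n → ℝ) (hq : ∀ u, 0 ≤ q u) :
    ∑ u ∈ Finset.univ.erase w, (2 * (sInd P w u * q u) *
        ∑ v ∈ Finset.univ.erase w, (if u = v then 0 else sInd P w v))
      ≤ 2 * ((d : ℝ) - 1) * ∑ u ∈ Finset.univ.erase w, sInd P w u * q u := by
  rw [Finset.mul_sum]
  refine Finset.sum_le_sum fun u hu => ?_
  have hinner : ∑ v ∈ Finset.univ.erase w, (if u = v then 0 else sInd P w v)
      = (outDeg P w : ℝ) - sInd P w u := by
    have hpt : ∀ v, (if u = v then (0:ℝ) else sInd P w v)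
        = sInd P w v - (if u = v then sInd P w v else 0) := by
      intro v; split <;> ring
    rw [Finset.sum_congr rfl fun v _ => hpt v, Finset.sum_sub_distrib, sInd_outDeg,
      Finset.sum_ite_eq, if_pos hu]
  rw [hinner]
  rcases eq_or_ne (P w u) 0 with h0 | h0
  · have hs : sInd P w u = 0 := by rw [sInd, if_neg (by simpa using h0)]
    rw [hs]; ring_nf; rfl
  · have hs : sInd P w u = 1 := by rw [sInd, if_pos h0]
    rw [hs]
    have hdeg : (outDeg P w : ℝ) - 1 ≤ (d : ℝ) - 1 := by
      have := hd w; exact sub_le_sub_right (by exact_mod_cast this) 1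
    calc 2 * (1 * q u) * ((outDeg P w : ℝ) - 1) ≤ 2 * (1 * q u) * ((d : ℝ) - 1) := by
          apply mul_le_mul_of_nonneg_left hdeg
          have := hq u; linarith
      _ = 2 * ((d : ℝ) - 1) * (1 * q u) := by ring

lemma key_inner {n : ℕ} (P : Matrix (Fin n) (Fin n) ℝ) {d : ℕ} (hd : ∀ i, outDeg P i ≤ d)
    (hd1 : 1 ≤ d) (f : Fin n → ℝ) (w : Fin n) :
    ∑ u, ∑ v, sInd P w u * sInd P w v * (f u - f v) ^ 2
      ≤ (4 * (d : ℝ) - 2) * ∑ v, adjMat P w v * (f w - f v) ^ 2 := by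
  classical
  set Ew := ∑ v, adjMat P w v * (f w - f v) ^ 2 with hEw
  have hEw_nonneg : 0 ≤ Ew :=
    Finset.sum_nonneg fun v _ => mul_nonneg (adjMat_nonneg P w v) (sq_nonneg _)
  have hW : w ∈ Finset.univ := Finset.mem_univ w
  -- part A1 : u = w
  have hA1 : ∑ v, sInd P w w * sInd P w v * (f w - f v) ^ 2 ≤ Ew := by
    refine Finset.sum_le_sum fun v _ => ?_
    rcases eq_or_ne v w with rfl | hvw
    · simp
    · calc sInd P w w * sInd P w v * (f w - f v) ^ 2
          ≤ (1 * adjMat P w v) * (f w - f v) ^ 2 :=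
            mul_le_mul_of_nonneg_right
              (mul_le_mul (sInd_le_one P w w) (sInd_le_adj P hvw)
                (sInd_nonneg P w v) zero_le_one) (sq_nonneg _)
        _ = adjMat P w v * (f w - f v) ^ 2 := by ring
  -- erase sums dominated by Ew
  have herase : ∀ g : Fin n → ℝ, (∀ u, g u = (f w - f u) ^ 2 ∨ g u = (f u - f w) ^ 2) →
      ∑ u ∈ Finset.univ.erase w, sInd P w u * g u ≤ Ew := by
    intro g hg
    have h1 : ∑ u ∈ Finset.univ.erase w, sInd P w u * g u
        ≤ ∑ u ∈ Finset.univ.erase w, adjMat P w u * (f w - f u) ^ 2 := by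
      refine Finset.sum_le_sum fun u hu => ?_
      have hu' : u ≠ w := (Finset.mem_erase.mp hu).1
      have hgu : g u = (f w - f u) ^ 2 := by
        rcases hg u with h | h
        · exact h
        · rw [h]; ring
      rw [hgu]
      exact mul_le_mul_of_nonneg_right (sInd_le_adj P hu') (sq_nonneg _)
    refine h1.trans ?_
    refine Finset.sum_le_sum_of_subset_of_nonneg (Finset.subset_univ _) fun v _ _ =>
      mul_nonneg (adjMat_nonneg P w v) (sq_nonneg _)
  -- part A2 : v = w
  have hA2 : ∑ u ∈ Finset.univ.erase w, sInd P w u * sInd P w w * (f u - f w) ^ 2 ≤ Ew := by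
    refine (Finset.sum_le_sum fun u hu => ?_).trans
      (herase (fun u => (f u - f w) ^ 2) (fun u => Or.inr rfl))
    calc sInd P w u * sInd P w w * (f u - f w) ^ 2
        ≤ (sInd P w u * 1) * (f u - f w) ^ 2 :=
          mul_le_mul_of_nonneg_right
            (mul_le_mul_of_nonneg_left (sInd_le_one P w w) (sInd_nonneg P w u)) (sq_nonneg _)
      _ = sInd P w u * (f u - f w) ^ 2 := by ring
  -- part A3
  have hA3 : ∑ u ∈ Finset.univ.erase w, ∑ v ∈ Finset.univ.erase w,
      sInd P w u * sInd P w v * (f u - f v) ^ 2 ≤ 4 * ((d : ℝ) - 1) * Ew := by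
    have hpt : ∀ u ∈ Finset.univ.erase w, ∀ v ∈ Finset.univ.erase w,
        sInd P w u * sInd P w v * (f u - f v) ^ 2
          ≤ 2 * (sInd P w u * (f u - f w) ^ 2) * (if u = v then 0 else sInd P w v)
            + 2 * (sInd P w v * (f w - f v) ^ 2) * (if v = u then 0 else sInd P w u) := by
      intro u _ v _
      rcases eq_or_ne u v with rfl | huv
      · simp
      · rw [if_neg huv, if_neg (Ne.symm huv)]
        have hkey : (f u - f v) ^ 2 ≤ 2 * (f u - f w) ^ 2 + 2 * (f w - f v) ^ 2 := by
          nlinarith [sq_nonneg (f u + f v - 2 * f w)]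
        have hnn : 0 ≤ sInd P w u * sInd P w v :=
          mul_nonneg (sInd_nonneg P w u) (sInd_nonneg P w v)
        calc sInd P w u * sInd P w v * (f u - f v) ^ 2
            ≤ sInd P w u * sInd P w v * (2 * (f u - f w) ^ 2 + 2 * (f w - f v) ^ 2) :=
              mul_le_mul_of_nonneg_left hkey hnn
          _ = 2 * (sInd P w u * (f u - f w) ^ 2) * sInd P w v
              + 2 * (sInd P w v * (f w - f v) ^ 2) * sInd P w u := by ring
    have hsplit : ∑ u ∈ Finset.univ.erase w, ∑ v ∈ Finset.univ.erase w,
        sInd P w u * sInd P w v * (f u - f v) ^ 2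
        ≤ (∑ u ∈ Finset.univ.erase w, ∑ v ∈ Finset.univ.erase w,
            2 * (sInd P w u * (f u - f w) ^ 2) * (if u = v then 0 else sInd P w v))
          + ∑ u ∈ Finset.univ.erase w, ∑ v ∈ Finset.univ.erase w,
            2 * (sInd P w v * (f w - f v) ^ 2) * (if v = u then 0 else sInd P w u) := by
      rw [← Finset.sum_add_distrib]
      refine Finset.sum_le_sum fun u hu => ?_
      rw [← Finset.sum_add_distrib]
      exact Finset.sum_le_sum fun v hv => hpt u hu v hv
    have hB1 : ∑ u ∈ Finset.univ.erase w, ∑ v ∈ Finset.univ.erase w,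
        2 * (sInd P w u * (f u - f w) ^ 2) * (if u = v then 0 else sInd P w v)
        ≤ 2 * ((d : ℝ) - 1) * Ew := by
      have := part_bound P hd hd1 w (fun u => (f u - f w) ^ 2) (fun u => sq_nonneg _)
      calc ∑ u ∈ Finset.univ.erase w, ∑ v ∈ Finset.univ.erase w,
            2 * (sInd P w u * (f u - f w) ^ 2) * (if u = v then 0 else sInd P w v)
          = ∑ u ∈ Finset.univ.erase w, (2 * (sInd P w u * (f u - f w) ^ 2) *
              ∑ v ∈ Finset.univ.erase w, (if u = v then 0 else sInd P w v)) := by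
            refine Finset.sum_congr rfl fun u _ => ?_
            rw [Finset.mul_sum]
        _ ≤ 2 * ((d : ℝ) - 1) * ∑ u ∈ Finset.univ.erase w, sInd P w u * (f u - f w) ^ 2 :=
            this
        _ ≤ 2 * ((d : ℝ) - 1) * Ew := by
            apply mul_le_mul_of_nonneg_left
              (herase (fun u => (f u - f w) ^ 2) (fun u => Or.inr rfl))
            have : (1 : ℝ) ≤ (d : ℝ) := by exact_mod_cast hd1
            linarith
    have hB2 : ∑ u ∈ Finset.univ.erase w, ∑ v ∈ Finset.univ.erase w,
        2 * (sInd P w v * (f w - f v) ^ 2) * (if v = u then 0 else sInd P w u)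
        ≤ 2 * ((d : ℝ) - 1) * Ew := by
      rw [Finset.sum_comm]
      have := part_bound P hd hd1 w (fun v => (f w - f v) ^ 2) (fun v => sq_nonneg _)
      calc ∑ v ∈ Finset.univ.erase w, ∑ u ∈ Finset.univ.erase w,
            2 * (sInd P w v * (f w - f v) ^ 2) * (if v = u then 0 else sInd P w u)
          = ∑ v ∈ Finset.univ.erase w, (2 * (sInd P w v * (f w - f v) ^ 2) *
              ∑ u ∈ Finset.univ.erase w, (if v = u then 0 else sInd P w u)) := by
            refine Finset.sum_congr rfl fun v _ => ?_
            rw [Finset.mul_sum]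
        _ ≤ 2 * ((d : ℝ) - 1) * ∑ v ∈ Finset.univ.erase w, sInd P w v * (f w - f v) ^ 2 :=
            this
        _ ≤ 2 * ((d : ℝ) - 1) * Ew := by
            apply mul_le_mul_of_nonneg_left
              (herase (fun v => (f w - f v) ^ 2) (fun v => Or.inl rfl))
            have : (1 : ℝ) ≤ (d : ℝ) := by exact_mod_cast hd1
            linarith
    calc ∑ u ∈ Finset.univ.erase w, ∑ v ∈ Finset.univ.erase w,
          sInd P w u * sInd P w v * (f u - f v) ^ 2 ≤ _ := hsplit
      _ ≤ 2 * ((d : ℝ) - 1) * Ew + 2 * ((d : ℝ) - 1) * Ew := add_le_add hB1 hB2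
      _ = 4 * ((d : ℝ) - 1) * Ew := by ring
  -- assemble
  have hdecomp : ∑ u, ∑ v, sInd P w u * sInd P w v * (f u - f v) ^ 2
      = (∑ v, sInd P w w * sInd P w v * (f w - f v) ^ 2)
        + ∑ u ∈ Finset.univ.erase w, ((sInd P w u * sInd P w w * (f u - f w) ^ 2)
            + ∑ v ∈ Finset.univ.erase w, sInd P w u * sInd P w v * (f u - f v) ^ 2) := by
    rw [← Finset.add_sum_erase _ _ hW]
    congr 1
    refine Finset.sum_congr rfl fun u _ => ?_
    rw [← Finset.add_sum_erase _ _ hW]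
  rw [hdecomp]
  rw [Finset.sum_add_distrib]
  calc (∑ v, sInd P w w * sInd P w v * (f w - f v) ^ 2)
        + ((∑ u ∈ Finset.univ.erase w, sInd P w u * sInd P w w * (f u - f w) ^ 2)
          + ∑ u ∈ Finset.univ.erase w, ∑ v ∈ Finset.univ.erase w,
              sInd P w u * sInd P w v * (f u - f v) ^ 2)
      ≤ Ew + (Ew + 4 * ((d : ℝ) - 1) * Ew) := add_le_add hA1 (add_le_add hA2 hA3)
    _ = (4 * (d : ℝ) - 2) * Ew := by ring

lemma counting {n : ℕ} {P : Matrix (Fin n) (Fin n) ℝ} {mu : Fin n → ℝ} {d : ℕ}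
    (hPnn : ∀ i j, 0 ≤ P i j) (hmupos : ∀ i, 0 < mu i)
    (hd : ∀ i, outDeg P i ≤ d) (hd1 : 1 ≤ d) (f : Fin n → ℝ) :
    ∑ u, ∑ v, adjMat (Pstar P mu * P) u v * (f u - f v) ^ 2
      ≤ (4 * (d : ℝ) - 2) * ∑ u, ∑ v, adjMat P u v * (f u - f v) ^ 2 := by
  classical
  have hpt : ∀ u v : Fin n, adjMat (Pstar P mu * P) u v * (f u - f v) ^ 2
      ≤ ∑ w, sInd P w u * sInd P w v * (f u - f v) ^ 2 := by
    intro u v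
    have hnn : ∀ w ∈ Finset.univ, (0:ℝ) ≤ sInd P w u * sInd P w v * (f u - f v) ^ 2 :=
      fun w _ => mul_nonneg (mul_nonneg (sInd_nonneg P w u) (sInd_nonneg P w v)) (sq_nonneg _)
    by_cases h : u ≠ v ∧ ((Pstar P mu * P) u v ≠ 0 ∨ (Pstar P mu * P) v u ≠ 0)
    · obtain ⟨huv, hor⟩ := h
      have hpivot : ∃ w, P w u ≠ 0 ∧ P w v ≠ 0 := by
        rcases hor with h1 | h1
        · exact (Q_ne_iff hPnn hmupos u v).mp h1
        · obtain ⟨w, hw1, hw2⟩ := (Q_ne_iff hPnn hmupos v u).mp h1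
          exact ⟨w, hw2, hw1⟩
      obtain ⟨w0, hw1, hw2⟩ := hpivot
      have hL : adjMat (Pstar P mu * P) u v = 1 := by
        simp only [adjMat, Matrix.of_apply]
        rw [if_pos ⟨huv, hor⟩]
      have hterm : sInd P w0 u * sInd P w0 v * (f u - f v) ^ 2 = (f u - f v) ^ 2 := by
        rw [sInd, sInd, if_pos hw1, if_pos hw2]; ring
      rw [hL, one_mul]
      exact le_trans (le_of_eq hterm.symm) (Finset.single_le_sum hnn (Finset.mem_univ w0))
    · have hL : adjMat (Pstar P mu * P) u v = 0 := by
        simp only [adjMat, Matrix.of_apply]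
        rw [if_neg h]
      rw [hL, zero_mul]
      exact Finset.sum_nonneg hnn
  calc ∑ u, ∑ v, adjMat (Pstar P mu * P) u v * (f u - f v) ^ 2
      ≤ ∑ u, ∑ v, ∑ w, sInd P w u * sInd P w v * (f u - f v) ^ 2 :=
        Finset.sum_le_sum fun u _ => Finset.sum_le_sum fun v _ => hpt u v
    _ = ∑ w, ∑ u, ∑ v, sInd P w u * sInd P w v * (f u - f v) ^ 2 := by
        rw [show (∑ u, ∑ v, ∑ w, sInd P w u * sInd P w v * (f u - f v) ^ 2)
            = ∑ u, ∑ w, ∑ v, sInd P w u * sInd P w v * (f u - f v) ^ 2 from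
          Finset.sum_congr rfl fun u _ => Finset.sum_comm]
        exact Finset.sum_comm
    _ ≤ ∑ w, (4 * (d : ℝ) - 2) * ∑ v, adjMat P w v * (f w - f v) ^ 2 :=
        Finset.sum_le_sum fun w _ => key_inner P hd hd1 f w
    _ = (4 * (d : ℝ) - 2) * ∑ u, ∑ v, adjMat P u v * (f u - f v) ^ 2 := by
        rw [← Finset.mul_sum]

lemma dot_single_sub {n : ℕ} (g : Fin n → ℝ) (u v : Fin n) :
    g ⬝ᵥ (Pi.single u 1 - Pi.single v 1) = g u - g v := by
  simp only [dotProduct, Pi.sub_apply, Pi.single_apply, mul_sub, mul_ite, mul_one, mul_zero,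
    Finset.sum_sub_distrib]
  rw [Finset.sum_ite_eq' Finset.univ u g, Finset.sum_ite_eq' Finset.univ v g]
  simp

lemma effRes_self {n : ℕ} (C : Matrix (Fin n) (Fin n) ℝ) (a : Fin n) : effRes C a a = 0 := by
  have hex : ∃ z : Fin n → ℝ, lap C *ᵥ z = Pi.single a 1 - Pi.single a 1 :=
    ⟨0, by rw [Matrix.mulVec_zero, sub_self]⟩
  simp only [effRes]
  rw [dif_pos hex, sub_self]

lemma lap_ker_const {n : ℕ} {C : Matrix (Fin n) (Fin n) ℝ} (hsym : Cᵀ = C)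
    (hnn : ∀ i j, 0 ≤ C i j) (f : Fin n → ℝ) (hf : lap C *ᵥ f = 0) :
    ∀ i j, C i j ≠ 0 → f i = f j := by
  have hq : quadB C f f = 0 := by
    rw [quadB_eq hsym, hf, dotProduct_zero, mul_zero]
  rw [quadB_sq] at hq
  have hterm : ∀ i ∈ Finset.univ, ∀ j ∈ Finset.univ, C i j * (f i - f j) ^ 2 = 0 := by
    have houter := (Finset.sum_eq_zero_iff_of_nonneg (fun i _ =>
      Finset.sum_nonneg fun j _ => mul_nonneg (hnn i j) (sq_nonneg _))).mp hq
    intro i hi j hj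
    exact (Finset.sum_eq_zero_iff_of_nonneg (fun j _ =>
      mul_nonneg (hnn i j) (sq_nonneg _))).mp (houter i hi) j hj
  intro i j hij
  have h0 := hterm i (Finset.mem_univ i) j (Finset.mem_univ j)
  have : (f i - f j) ^ 2 = 0 := by
    rcases mul_eq_zero.mp h0 with h | h
    · exact absurd h hij
    · exact h
  have := pow_eq_zero_iff (n := 2) (by norm_num) |>.mp this
  linarith [sub_eq_zero.mp this]

set_option maxHeartbeats 2000000 in
/-- Back-and-forth path bound:
`(1/(4δ_out − 2)) R_{uv}(G(P)) ≤ R_{uv}(G(P*P)) ≤ R_{uv}(G(P))`. -/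
theorem stmt15 {n : ℕ} (P : Matrix (Fin n) (Fin n) ℝ) (mu : Fin n → ℝ)
    (hP : IsConsensus P) (hmu : IsInvMeasure P mu)
    (dout : ℕ) (hdout : (∀ i, outDeg P i ≤ dout) ∧ ∃ i, outDeg P i = dout) :
    ∀ u v : Fin n,
      (1 / (4 * (dout : ℝ) - 2)) * effRes (adjMat P) u v ≤
          effRes (adjMat (Pstar P mu * P)) u v ∧
        effRes (adjMat (Pstar P mu * P)) u v ≤ effRes (adjMat P) u v := by
  obtain ⟨hPnn, hrow, hirr, hdiag⟩ := hP
  obtain ⟨hmupos, hmusum, hmufix⟩ := hmu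
  intro u v
  by_cases huv : u = v
  · subst huv
    rw [effRes_self, effRes_self]
    constructor <;> simp
  · have hsymC : (adjMat P)ᵀ = adjMat P := adjMat_sym P
    have hsymC' : (adjMat (Pstar P mu * P))ᵀ = adjMat (Pstar P mu * P) := adjMat_sym _
    have hnnC : ∀ i j, 0 ≤ adjMat P i j := adjMat_nonneg P
    have hnnC' : ∀ i j, 0 ≤ adjMat (Pstar P mu * P) i j := adjMat_nonneg _
    have hle : ∀ i j, adjMat P i j ≤ adjMat (Pstar P mu * P) i j := adj_le hPnn hmupos hdiag
    obtain ⟨a, b, hba, hab⟩ := exists_edge hPnn hirr huv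
    have hd1 : 1 ≤ dout := by
      have h1 : 1 ≤ outDeg P a := by
        apply Finset.card_pos.mpr
        exact ⟨b, Finset.mem_filter.mpr ⟨Finset.mem_univ b, hba, hab⟩⟩
      exact le_trans h1 (hdout.1 a)
    have hkerC : ∀ f, lap (adjMat P) *ᵥ f = 0 → ∀ i j, f i = f j := fun f hf =>
      conn_of_adj hPnn hirr f (lap_ker_const hsymC hnnC f hf)
    have hkerC' : ∀ f, lap (adjMat (Pstar P mu * P)) *ᵥ f = 0 → ∀ i j, f i = f j := by
      intro f hf
      refine conn_of_adj hPnn hirr f fun i j hij => ?_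
      refine lap_ker_const hsymC' hnnC' f hf i j ?_
      have h1 : 0 < adjMat P i j := (hnnC i j).lt_of_ne (Ne.symm hij)
      exact (h1.trans_le (hle i j)).ne'
    have hesum : ∑ i, (Pi.single u 1 - Pi.single v 1 : Fin n → ℝ) i = 0 := by
      simp only [Pi.sub_apply, Pi.single_apply, Finset.sum_sub_distrib]
      rw [Finset.sum_ite_eq' Finset.univ u (fun _ => (1:ℝ)),
        Finset.sum_ite_eq' Finset.univ v (fun _ => (1:ℝ))]
      simp
    have hexC : ∃ z : Fin n → ℝ, lap (adjMat P) *ᵥ z = Pi.single u 1 - Pi.single v 1 :=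
      exists_lap_solution _ hsymC hkerC _ hesum
    have hexC' : ∃ z : Fin n → ℝ,
        lap (adjMat (Pstar P mu * P)) *ᵥ z = Pi.single u 1 - Pi.single v 1 :=
      exists_lap_solution _ hsymC' hkerC' _ hesum
    simp only [effRes]
    rw [dif_pos hexC, dif_pos hexC']
    set x := hexC.choose with hxdef
    set y := hexC'.choose with hydef
    have hx : lap (adjMat P) *ᵥ x = Pi.single u 1 - Pi.single v 1 := hexC.choose_spec
    have hy : lap (adjMat (Pstar P mu * P)) *ᵥ y = Pi.single u 1 - Pi.single v 1 :=
      hexC'.choose_spec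
    clear_value x y
    have k1 : quadB (adjMat P) x x = 2 * (x u - x v) := by
      rw [quadB_eq hsymC, hx, dot_single_sub]
    have k2 : quadB (adjMat (Pstar P mu * P)) y y = 2 * (y u - y v) := by
      rw [quadB_eq hsymC', hy, dot_single_sub]
    have k3 : quadB (adjMat P) y x = 2 * (y u - y v) := by
      rw [quadB_eq hsymC, hx, dot_single_sub]
    have k4 : quadB (adjMat (Pstar P mu * P)) x y = 2 * (x u - x v) := by
      rw [quadB_eq hsymC', hy, dot_single_sub]
    have hRnn : 0 ≤ x u - x v := by
      have := quadB_nonneg hnnC x; linarith [k1]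
    have hR'nn : 0 ≤ y u - y v := by
      have := quadB_nonneg hnnC' y; linarith [k2]
    have cs1 := quadB_cs hnnC y x
    have mono1 : quadB (adjMat P) y y ≤ quadB (adjMat (Pstar P mu * P)) y y := quadB_mono hle y
    have cs2 := quadB_cs hnnC' x y
    have count : quadB (adjMat (Pstar P mu * P)) x x
        ≤ (4 * (dout : ℝ) - 2) * quadB (adjMat P) x x := by
      rw [quadB_sq, quadB_sq]
      exact counting hPnn hmupos hdout.1 hd1 x
    have hc : (0:ℝ) < 4 * (dout : ℝ) - 2 := by
      have : (1:ℝ) ≤ (dout : ℝ) := by exact_mod_cast hd1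
      linarith
    have hqC'xx : 0 ≤ quadB (adjMat (Pstar P mu * P)) x x := quadB_nonneg hnnC' x
    have hqCyy : 0 ≤ quadB (adjMat P) y y := quadB_nonneg hnnC y
    constructor
    · -- lower bound
      rw [div_mul_eq_mul_div, one_mul, div_le_iff₀ hc]
      -- from cs2 : (2R)^2 ≤ qC'xx * (2R'), count : qC'xx ≤ c * 2R
      rw [k4, k2] at cs2
      rw [k1] at count
      rcases eq_or_lt_of_le hRnn with hR0 | hRpos
      · nlinarith [hR'nn, hc]
      · nlinarith [cs2, count, hRpos, hR'nn, hc, hqC'xx]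
    · -- upper bound
      rw [k3, k1] at cs1
      rw [k2] at mono1
      nlinarith [cs1, mono1, hRnn, hR'nn, hqCyy]
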